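/- Suppose X and Y are singular formal vector fields on (C^n,0) such that Exp(X) = Exp(Y) = F, D_0X = D_0Y, and Y belongs to the Lie algebra of the pro-algebraic closure of ⟨F⟩. Then X = Y. -/

import Mathlib

open MvPowerSeries

noncomputable section

/-- Formal power series in `n` variables over `ℂ`. -/
abbrev PS (n : ℕ) := MvPowerSeries (Fin n) ℂ

/-- A formal diffeomorphism of `(ℂ^n,0)`, modelled as a `ℂ`-algebra automorphism of
`ℂ[[x₁,…,xₙ]]` (acting by composition `g ↦ g ∘ F`). -/
abbrev FormalDiffeo (n : ℕ) := PS n ≃ₐ[ℂ] PS n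

/-- A formal (singular) vector field on `(ℂ^n,0)`: a derivation of `ℂ[[x₁,…,xₙ]]`. -/
abbrev FormalVF (n : ℕ) := Derivation ℂ (PS n) (PS n)

/-- The space of `k`-jets: truncated coefficient data of the components of a diffeomorphism. -/
abbrev JetSpace (n k : ℕ) :=
  Fin n → {d : Fin n →₀ ℕ // (d.sum fun _ e => e) ≤ k} → ℂ

/-- The `k`-jet of a formal diffeomorphism. -/
def jetOf (n k : ℕ) (F : FormalDiffeo n) : JetSpace n k :=
  fun i d => coeff (R := ℂ) d.1 (F (X i))

/-- Polynomial functions on the jet space: the algebra generated by coordinates. -/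
def polyFuns (n k : ℕ) : Subalgebra ℂ (JetSpace n k → ℂ) :=
  Algebra.adjoin ℂ {φ | ∃ i d, φ = fun J => J i d}

/-- The Zariski topology on the jet space. -/
def zTop (n k : ℕ) : TopologicalSpace (JetSpace n k) :=
  .generateFrom {U | ∃ φ ∈ polyFuns n k, U = {x | φ x ≠ 0}}

/-- The pro-algebraic (Zariski) closure of a set of formal diffeomorphisms:
those whose `k`-jet lies, for every `k`, in the Zariski closure of the set of `k`-jets. -/
def proAlgClosure {n : ℕ} (G : Set (FormalDiffeo n)) : Set (FormalDiffeo n) :=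
  {F | ∀ k, jetOf n k F ∈ @closure _ (zTop n k) (jetOf n k '' G)}

/-- The connected component of the identity of the pro-algebraic closure:
those diffeomorphisms whose `k`-jet lies, for every `k`, in the Zariski-connected component
of the jet of the identity inside the Zariski closure of the `k`-jets. -/
def proAlgIdComp {n : ℕ} (G : Set (FormalDiffeo n)) : Set (FormalDiffeo n) :=
  {F | ∀ k, jetOf n k F ∈
    @connectedComponentIn _ (zTop n k)
      (@closure _ (zTop n k) (jetOf n k '' G)) (jetOf n k 1)}

/-- `j`-th iterate of a derivation, as a map. -/
def derivPow {n : ℕ} (Y : FormalVF n) (j : ℕ) (g : PS n) : PS n :=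
  ((Y.toLinearMap : PS n →ₗ[ℂ] PS n) ^ j) g

/-- The time-one flow `Exp(Y)` applied to `g`, namely `∑_j Y^j(g)/j!`, where the
(countable) sum of each coefficient is taken in `ℂ`. -/
def expSeries {n : ℕ} (Y : FormalVF n) (g : PS n) : PS n :=
  fun d => ∑' j : ℕ, ((j.factorial : ℂ))⁻¹ * coeff (R := ℂ) d (derivPow Y j g)

/-- `F` is the time-one flow (exponential) of the formal vector field `Y`. -/
def IsExpOf {n : ℕ} (F : FormalDiffeo n) (Y : FormalVF n) : Prop :=
  ∀ g : PS n, F g = expSeries Y g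

/-- A formal vector field is singular if it vanishes at the origin. -/
def IsSingularVF {n : ℕ} (Y : FormalVF n) : Prop :=
  ∀ i : Fin n, constantCoeff (σ := Fin n) (R := ℂ) (Y (X i)) = 0

/-- `Y` belongs to the Lie algebra of the pro-algebraic closure of `G`
(characterized by all its time-`t` flows lying in the closure). -/
def InLieAlgOf {n : ℕ} (G : Set (FormalDiffeo n)) (Y : FormalVF n) : Prop :=
  ∀ t : ℂ, ∃ F : FormalDiffeo n, F ∈ proAlgClosure G ∧ IsExpOf F (t • Y)

/-- `Y` is an infinitesimal generator of `F`. -/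
def IsInfGen {n : ℕ} (Y : FormalVF n) (F : FormalDiffeo n) : Prop :=
  IsSingularVF Y ∧ IsExpOf F Y ∧ InLieAlgOf (Subgroup.zpowers F : Set (FormalDiffeo n)) Y

/-- The linear part `D₀F` of a formal diffeomorphism. -/
def linPartD {n : ℕ} (F : FormalDiffeo n) : Matrix (Fin n) (Fin n) ℂ :=
  Matrix.of fun i j => coeff (R := ℂ) (Finsupp.single j 1) (F (X i))

/-- The linear part `D₀Y` of a formal vector field. -/
def linPartV {n : ℕ} (Y : FormalVF n) : Matrix (Fin n) (Fin n) ℂ :=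
  Matrix.of fun i j => coeff (R := ℂ) (Finsupp.single j 1) (Y (X i))

/-- Substitution of a tuple of one-variable power series (a formal curve) into a
multivariate power series. -/
def substCurve {n : ℕ} (γ : Fin n → PowerSeries ℂ) (f : PS n) : PowerSeries ℂ :=
  PowerSeries.mk fun m =>
    ∑' e : (Fin n →₀ ℕ), coeff (R := ℂ) e f * PowerSeries.coeff (R := ℂ) m (∏ i, (γ i) ^ (e i))

/-- Substitution (composition) of one-variable power series: `g ∘ θ`. -/
def substPS (θ g : PowerSeries ℂ) : PowerSeries ℂ :=
  PowerSeries.mk fun m =>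
    ∑' e : ℕ, PowerSeries.coeff (R := ℂ) e g * PowerSeries.coeff (R := ℂ) m (θ ^ e)

/-- Substitution of a tuple of `n`-variable power series into an `n`-variable power series. -/
def substMv {n : ℕ} (σ : Fin n → PS n) (f : PS n) : PS n :=
  fun d => ∑' e : (Fin n →₀ ℕ), coeff (R := ℂ) e f * coeff (R := ℂ) d (∏ i, (σ i) ^ (e i))

/-- `γ` (with `θ`) is a formal invariant curve of the formal diffeomorphism `F`:
`γ` is a nonzero tuple of power series without constant term, `θ` is a formal
diffeomorphism in one variable, and `F ∘ γ = γ ∘ θ`. -/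
def IsInvariantCurve {n : ℕ} (F : FormalDiffeo n) (γ : Fin n → PowerSeries ℂ)
    (θ : PowerSeries ℂ) : Prop :=
  γ ≠ 0 ∧ (∀ i, PowerSeries.constantCoeff (R := ℂ) (γ i) = 0) ∧
    PowerSeries.constantCoeff (R := ℂ) θ = 0 ∧ PowerSeries.coeff (R := ℂ) 1 θ ≠ 0 ∧
    ∀ i, substCurve γ (F (X i)) = substPS θ (γ i)




namespace Aux

variable {n : ℕ}

/-- total degree of a multi-index -/
def degF (d : Fin n →₀ ℕ) : ℕ := d.sum fun _ e => e

lemma degF_add (a b : Fin n →₀ ℕ) : degF (a + b) = degF a + degF b := by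
  simpa [degF] using Finsupp.sum_add_index' (by simp) (by simp) (f := a) (g := b)
    (h := fun _ e => e)

lemma degF_zero : degF (0 : Fin n →₀ ℕ) = 0 := by simp [degF]

lemma degF_single (i : Fin n) (m : ℕ) : degF (Finsupp.single i m) = m := by
  simp [degF]

lemma degF_eq_zero {d : Fin n →₀ ℕ} (h : degF d = 0) : d = 0 := by
  ext i
  by_cases hi : i ∈ d.support
  · have := Finset.sum_eq_zero_iff.mp (h : (d.sum fun _ e => e) = 0)
    · exact this i hi
  · simpa using Finsupp.notMem_support_iff.mp hi

lemma le_degF (d : Fin n →₀ ℕ) (i : Fin n) : d i ≤ degF d := by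
  by_cases hi : i ∈ d.support
  · exact Finset.single_le_sum (f := fun j => d j) (fun _ _ => Nat.zero_le _) hi
  · rw [Finsupp.notMem_support_iff.mp hi]; exact Nat.zero_le _

lemma degF_mono {a b : Fin n →₀ ℕ} (h : a ≤ b) : degF a ≤ degF b := by
  have hb : b = a + (b - a) := by
    ext i
    have := Finsupp.le_def.mp h i
    simp [Finsupp.tsub_apply]
    omega
  rw [hb, degF_add]; omega

/-- the order-vanishing predicate: all coefficients of degree < k vanish -/
def InM (k : ℕ) (f : PS n) : Prop := ∀ d : Fin n →₀ ℕ, degF d < k → coeff (R := ℂ) d f = 0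

lemma InM.mono {k l : ℕ} (h : l ≤ k) {f : PS n} (hf : InM k f) : InM l f :=
  fun d hd => hf d (lt_of_lt_of_le hd h)

lemma InM_zero_mem (k : ℕ) : InM k (0 : PS n) := by intro d _; simp

lemma InM.add {k : ℕ} {f g : PS n} (hf : InM k f) (hg : InM k g) : InM k (f + g) := by
  intro d hd; simp [map_add, hf d hd, hg d hd]

lemma InM.sub {k : ℕ} {f g : PS n} (hf : InM k f) (hg : InM k g) : InM k (f - g) := by
  intro d hd; simp [map_sub, hf d hd, hg d hd]

lemma InM.sum {k : ℕ} {ι : Type*} {s : Finset ι} {f : ι → PS n}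
    (h : ∀ i ∈ s, InM k (f i)) : InM k (∑ i ∈ s, f i) := by
  intro d hd
  rw [map_sum]
  exact Finset.sum_eq_zero fun i hi => h i hi d hd

lemma InM.smul {k : ℕ} (c : ℂ) {f : PS n} (hf : InM k f) : InM k (c • f) := by
  intro d hd
  rw [map_smul]
  simp [hf d hd]

lemma InM.mul {a b : ℕ} {f g : PS n} (hf : InM a f) (hg : InM b g) : InM (a + b) (f * g) := by
  intro d hd
  rw [coeff_mul]
  apply Finset.sum_eq_zero
  rintro ⟨u, v⟩ huv
  rw [Finset.HasAntidiagonal.mem_antidiagonal] at huv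
  have hduv : degF u + degF v = degF d := by rw [← degF_add, huv]
  by_cases hu : degF u < a
  · simp [hf u hu]
  · have : degF v < b := by omega
    simp [hg v this]

lemma InM_monomial {k : ℕ} (e : Fin n →₀ ℕ) (c : ℂ) (h : k ≤ degF e) :
    InM k (monomial (R := ℂ) e c : PS n) := by
  intro d hd
  rw [coeff_monomial]
  have : d ≠ e := by rintro rfl; omega
  simp only [this, if_false]

lemma sub_single_add {d : Fin n →₀ ℕ} {i : Fin n} (h : 1 ≤ d i) :
    d - Finsupp.single i 1 + Finsupp.single i 1 = d := by
  ext i'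
  rcases eq_or_ne i i' with rfl | hne
  · simp only [Finsupp.add_apply, Finsupp.tsub_apply, Finsupp.single_eq_same]
    omega
  · simp [Finsupp.single_eq_of_ne' hne]

lemma single_le_iff' {d : Fin n →₀ ℕ} {i : Fin n} (h : 1 ≤ d i) : Finsupp.single i 1 ≤ d := by
  intro i'
  rcases eq_or_ne i i' with rfl | hne
  · simpa using h
  · simp [Finsupp.single_apply, if_neg hne]

-- decomposition lemma
lemma decomp {k : ℕ} {f : PS n} (hf : InM (k+1) f) :
    ∃ g : Fin n → PS n, (∀ i, InM k (g i)) ∧ f = ∑ i, X i * g i := by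
  classical
  refine ⟨fun i => fun e =>
    if (e + Finsupp.single i 1).support.min = (i : WithTop (Fin n)) then
      coeff (R := ℂ) (e + Finsupp.single i 1) f else 0, ?_, ?_⟩
  · intro i e he
    erw [coeff_apply]
    beta_reduce
    split
    · apply hf
      rw [degF_add, degF_single]
      omega
    · rfl
  · ext d
    rw [map_sum]
    by_cases hd : d = 0
    · subst hd
      have h0 : coeff (R := ℂ) (0 : Fin n →₀ ℕ) f = 0 := hf 0 (by simp [degF])
      rw [h0]
      symm; apply Finset.sum_eq_zero
      intro i _
      erw [X_def, coeff_monomial_mul]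
      rw [if_neg]
      intro h
      have := Finsupp.le_def.mp h i
      simp at this
    · have hsupp : d.support.Nonempty := by
        rw [Finsupp.support_nonempty_iff]; exact hd
      obtain ⟨j, hj⟩ := Finset.min_of_nonempty hsupp
      have hjmem : j ∈ d.support := Finset.mem_of_min hj
      have hdj : 1 ≤ d j := by
        have := Finsupp.mem_support_iff.mp hjmem; omega
      rw [Finset.sum_eq_single j]
      · erw [X_def, coeff_monomial_mul, if_pos (single_le_iff' hdj), one_mul]
        simp only [coeff_apply]
        erw [coeff_apply]
        beta_reduce
        rw [sub_single_add hdj]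
        rw [hj]
        split
        · rfl
        · rename_i hcon; exact absurd rfl hcon
      · intro i _ hij
        erw [X_def, coeff_monomial_mul]
        split
        · rw [one_mul]
          simp only [coeff_apply]
          erw [coeff_apply]
          beta_reduce
          rename_i hle
          have h1 : 1 ≤ d i := by simpa using Finsupp.le_def.mp hle i
          rw [sub_single_add h1, hj]
          have hne : ¬((j : WithTop (Fin n)) = (i : WithTop (Fin n))) :=
            fun h => hij (WithTop.coe_inj.mp h).symm
          split
          · rename_i hcon; exact absurd hcon hne
          · rfl
        · rfl
      · intro h; exact absurd (Finset.mem_univ j) h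


lemma InM_top (f : PS n) : InM 0 f := by intro d hd; omega

lemma InM_X (i : Fin n) : InM 1 (X i : PS n) := by
  rw [X_def]
  exact InM_monomial _ _ (by rw [degF_single])

/-- index type for jets -/
abbrev Idx (n k : ℕ) := {d : Fin n →₀ ℕ // (d.sum fun _ e => e) ≤ k}

lemma Idx_prop {k : ℕ} (d : Idx n k) : degF d.1 ≤ k := d.2

instance IdxFintype (k : ℕ) : Fintype (Idx n k) := by
  apply Fintype.ofInjective (f := fun (d : Idx n k) (i : Fin n) =>
    (⟨d.1 i, Nat.lt_succ_of_le (le_trans (le_degF d.1 i) d.2)⟩ : Fin (k+1)))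
  intro d e h
  apply Subtype.ext
  ext i
  exact congrArg Fin.val (congrFun h i)

/-- truncation -/
def trunc (k : ℕ) (f : PS n) : PS n := ∑ d : Idx n k, monomial (R := ℂ) d.1 (coeff (R := ℂ) d.1 f)

lemma coeff_trunc (k : ℕ) (f : PS n) (d : Fin n →₀ ℕ) :
    coeff (R := ℂ) d (trunc k f) = if degF d ≤ k then coeff (R := ℂ) d f else 0 := by
  classical
  rw [trunc, map_sum]
  split
  · rename_i h
    rw [Finset.sum_eq_single (⟨d, h⟩ : Idx n k)]
    · rw [coeff_monomial, if_pos rfl]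
    · intro e _ he
      rw [coeff_monomial, if_neg]
      intro hde
      exact he (Subtype.ext hde.symm)
    · intro h'; exact absurd (Finset.mem_univ _) h'
  · rename_i h
    apply Finset.sum_eq_zero
    intro e _
    rw [coeff_monomial, if_neg]
    intro hde
    exact h (hde ▸ e.2)

lemma sub_trunc (k : ℕ) (f : PS n) : InM (k+1) (f - trunc k f) := by
  intro d hd
  rw [map_sub, coeff_trunc, if_pos (by omega)]
  ring

/-- any derivation lowers order by at most one -/
lemma deriv_shift (D : Derivation ℂ (PS n) (PS n)) :
    ∀ k, ∀ f : PS n, InM (k+1) f → InM k (D f) := by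
  intro k
  induction k with
  | zero => intro f _; exact InM_top _
  | succ k ih =>
    intro f hf
    obtain ⟨g, hg, rfl⟩ := decomp hf
    rw [map_sum]
    have : ∀ i : Fin n, InM (k+1) (D (X i * g i)) := by
      intro i
      rw [Derivation.leibniz, smul_eq_mul, smul_eq_mul]
      apply InM.add
      · exact (InM.mul (a := 1) (InM_X i) (ih _ (hg i))).mono (by omega)
      · exact (InM.mul (a := k+1) (b := 0) (hg i) (InM_top _)).mono (by omega)
    exact InM.sum (fun i _ => this i)

lemma sum_single_eq (e : Fin n →₀ ℕ) : ∑ j : Fin n, Finsupp.single j (e j) = e := by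
  ext i
  rw [Finsupp.finset_sum_apply]
  rw [Finset.sum_eq_single i]
  · simp
  · intro j _ hji; exact Finsupp.single_eq_of_ne' hji
  · intro h; exact absurd (Finset.mem_univ _) h

lemma prod_pow_single (a : Fin n → PS n) (i : Fin n) :
    ∏ j : Fin n, a j ^ (Finsupp.single i 1 : Fin n →₀ ℕ) j = a i := by
  rw [Finset.prod_eq_single i]
  · simp
  · intro j _ hji; rw [Finsupp.single_eq_of_ne' (fun h => hji h.symm), pow_zero]
  · intro h; exact absurd (Finset.mem_univ _) h

lemma prod_pow_add (a : Fin n → PS n) (e e' : Fin n →₀ ℕ) :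
    ∏ j : Fin n, a j ^ (e + e') j =
      (∏ j : Fin n, a j ^ e j) * ∏ j : Fin n, a j ^ e' j := by
  rw [← Finset.prod_mul_distrib]
  apply Finset.prod_congr rfl
  intro j _
  rw [Finsupp.add_apply, pow_add]

lemma prod_X_pow (e : Fin n →₀ ℕ) :
    ∏ j : Fin n, (X j : PS n) ^ e j = monomial (R := ℂ) e 1 := by
  have : ∀ j : Fin n, (X j : PS n) ^ e j = monomial (R := ℂ) (Finsupp.single j (e j)) 1 :=
    fun j => X_pow_eq j (e j)
  rw [Finset.prod_congr rfl (fun j _ => this j)]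
  have key : ∀ s : Finset (Fin n),
      ∏ j ∈ s, (monomial (R := ℂ) (Finsupp.single j (e j)) 1 : PS n) =
        monomial (R := ℂ) (∑ j ∈ s, Finsupp.single j (e j)) 1 := by
    intro s
    induction s using Finset.cons_induction with
    | empty => simp
    | cons j s hj ih =>
      rw [Finset.prod_cons, ih, monomial_mul_monomial, Finset.sum_cons, one_mul]
  rw [key Finset.univ, sum_single_eq]

lemma monomial_eq_smul_prod (e : Fin n →₀ ℕ) (c : ℂ) :
    (monomial (R := ℂ) e c : PS n) = c • ∏ j : Fin n, (X j : PS n) ^ e j := by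
  rw [prod_X_pow, ← map_smul, smul_eq_mul, mul_one]

/-- graded derivation bound on monomials -/
lemma deriv_monomial_bound (D : Derivation ℂ (PS n) (PS n)) (m : ℕ)
    (hD : ∀ i, InM (m+1) (D (X i))) :
    ∀ N (e : Fin n →₀ ℕ) (c : ℂ), degF e = N → InM (degF e + m) (D (monomial (R := ℂ) e c)) := by
  intro N
  induction N with
  | zero =>
    intro e c he
    have he0 : e = 0 := degF_eq_zero he
    subst he0
    have : (monomial (R := ℂ) (0 : Fin n →₀ ℕ) c : PS n) = algebraMap ℂ (PS n) c := by
      rw [← c_eq_algebraMap]; rfl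
    rw [this, Derivation.map_algebraMap]
    exact InM_zero_mem _
  | succ N ih =>
    intro e c he
    have hs : e.support.Nonempty := by
      rw [Finsupp.support_nonempty_iff]
      intro h0; rw [h0, degF_zero] at he; omega
    obtain ⟨i, hi⟩ := hs
    have hei : 1 ≤ e i := by have := Finsupp.mem_support_iff.mp hi; omega
    have hre : e - Finsupp.single i 1 + Finsupp.single i 1 = e := sub_single_add hei
    set e' := e - Finsupp.single i 1 with he'
    have hdege' : degF e' = N := by
      have := degF_add e' (Finsupp.single i 1)
      rw [hre] at this
      rw [degF_single] at this
      omega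
    have hmon : (monomial (R := ℂ) e c : PS n) = monomial (R := ℂ) e' c * X i := by
      rw [X_def, monomial_mul_monomial, mul_one, hre]
    rw [hmon, Derivation.leibniz, smul_eq_mul, smul_eq_mul]
    have h1 : InM (degF e + m) (monomial (R := ℂ) e' c * D (X i)) := by
      have := InM.mul (InM_monomial (k := degF e') e' c le_rfl) (hD i)
      apply this.mono
      rw [hdege']
      omega
    have h2 : InM (degF e + m) (X i * D (monomial (R := ℂ) e' c)) := by
      have := InM.mul (InM_X i) (ih e' c hdege')
      apply this.mono
      rw [hdege']
      omega
    exact h1.add h2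

/-- graded derivation bound -/
lemma deriv_bound (D : Derivation ℂ (PS n) (PS n)) (m : ℕ)
    (hD : ∀ i, InM (m+1) (D (X i))) {a : ℕ} {f : PS n} (hf : InM a f) :
    InM (a + m) (D f) := by
  intro d hd
  set K := degF d with hK
  have hsplit : D f = D (trunc (K+1) f) + D (f - trunc (K+1) f) := by
    rw [← map_add]; ring_nf
  rw [hsplit, map_add]
  have h2 : coeff (R := ℂ) d (D (f - trunc (K+1) f)) = 0 := by
    have := deriv_shift D (K+1) _ (sub_trunc (K+1) f)
    exact this d (by omega)
  rw [h2, add_zero]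
  rw [trunc, map_sum, map_sum]
  apply Finset.sum_eq_zero
  intro e _
  by_cases hc : coeff (R := ℂ) e.1 f = 0
  · rw [hc, map_zero, map_zero]; rfl
  · have hae : a ≤ degF e.1 := by
      by_contra hlt
      exact hc (hf e.1 (by omega))
    exact deriv_monomial_bound D m hD (degF e.1) e.1 _ rfl d (by omega)

/-- singular derivations preserve order -/
lemma singular_preserve (D : Derivation ℂ (PS n) (PS n))
    (hD : ∀ i, InM 1 (D (X i))) {a : ℕ} {f : PS n} (hf : InM a f) : InM a (D f) := by
  have := deriv_bound D 0 (by simpa using hD) hf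
  simpa using this

/-- a derivation vanishing on the variables vanishes -/
lemma deriv_eq_zero (D : Derivation ℂ (PS n) (PS n))
    (hD : ∀ i, D (X i) = 0) (f : PS n) : D f = 0 := by
  ext d
  have : ∀ m : ℕ, InM (0 + m) (D f) := by
    intro m
    apply deriv_bound D m _ (InM_top f)
    intro i
    rw [hD i]
    exact InM_zero_mem _
  rw [map_zero]
  show coeff (R := ℂ) d (D f) = 0
  exact this (degF d + 1) d (by omega)

lemma InM_one_iff {f : PS n} : InM 1 f ↔ constantCoeff (σ := Fin n) (R := ℂ) f = 0 := by
  constructor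
  · intro h
    rw [← coeff_zero_eq_constantCoeff_apply]
    exact h 0 (by rw [degF_zero]; omega)
  · intro h d hd
    have : d = 0 := degF_eq_zero (by omega)
    subst this
    rw [coeff_zero_eq_constantCoeff_apply, h]

variable {A : PS n ≃ₐ[ℂ] PS n}

lemma aeq_X_constantCoeff (A : PS n ≃ₐ[ℂ] PS n) (i : Fin n) :
    constantCoeff (σ := Fin n) (R := ℂ) (A (X i)) = 0 := by
  by_contra hc
  set c := constantCoeff (σ := Fin n) (R := ℂ) (A (X i)) with hcdef
  have hunit : IsUnit ((X i : PS n) - algebraMap ℂ (PS n) c) := by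
    rw [isUnit_iff_constantCoeff]
    rw [map_sub, constantCoeff_X]
    rw [← c_eq_algebraMap, constantCoeff_C]
    simpa using isUnit_iff_ne_zero.mpr hc
  have : IsUnit (A ((X i : PS n) - algebraMap ℂ (PS n) c)) := hunit.map A
  rw [map_sub, AlgEquiv.commutes] at this
  have h0 := isUnit_constantCoeff _ this
  rw [map_sub, ← c_eq_algebraMap, constantCoeff_C, ← hcdef, sub_self] at h0
  exact (by simpa using h0 : False)

lemma aeq_preserves_InM_one (A : PS n ≃ₐ[ℂ] PS n) {f : PS n} (hf : InM 1 f) :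
    InM 1 (A f) := by
  obtain ⟨g, _, rfl⟩ := decomp (k := 0) hf
  rw [map_sum, InM_one_iff, map_sum]
  apply Finset.sum_eq_zero
  intro i _
  rw [map_mul, map_mul, aeq_X_constantCoeff, zero_mul]

lemma aeq_preserves_InM (A : PS n ≃ₐ[ℂ] PS n) :
    ∀ k {f : PS n}, InM k f → InM k (A f) := by
  intro k
  induction k with
  | zero => intro f _; exact InM_top _
  | succ k ih =>
    intro f hf
    obtain ⟨g, hg, rfl⟩ := decomp hf
    rw [map_sum]
    apply InM.sum
    intro i _
    rw [map_mul]
    have := InM.mul (a := 1) (aeq_preserves_InM_one A (InM_X i)) (ih (hg i))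
    exact this.mono (by omega)

/-- congruence mod higher order -/
lemma congr_mul {k : ℕ} {a a' b b' : PS n} (ha : InM k (a - a')) (hb : InM k (b - b')) :
    InM k (a * b - a' * b') := by
  have : a * b - a' * b' = a * (b - b') + (a - a') * b' := by ring
  rw [this]
  exact ((InM.mul (a := 0) (InM_top a) hb).mono (by omega)).add
    ((InM.mul (b := 0) ha (InM_top b')).mono (by omega))

lemma congr_pow {k : ℕ} {a a' : PS n} (ha : InM k (a - a')) (m : ℕ) :
    InM k (a ^ m - a' ^ m) := by
  induction m with
  | zero => simpa using InM_zero_mem k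
  | succ m ih =>
    rw [pow_succ, pow_succ]
    exact congr_mul ih ha

lemma congr_prod {k : ℕ} {a a' : Fin n → PS n} (ha : ∀ j, InM k (a j - a' j))
    (e : Fin n →₀ ℕ) :
    InM k (∏ j : Fin n, a j ^ e j - ∏ j : Fin n, a' j ^ e j) := by
  have key : ∀ s : Finset (Fin n),
      InM k (∏ j ∈ s, a j ^ e j - ∏ j ∈ s, a' j ^ e j) := by
    intro s
    induction s using Finset.cons_induction with
    | empty => simpa using InM_zero_mem k
    | cons j s hj ih =>
      rw [Finset.prod_cons, Finset.prod_cons]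
      exact congr_mul (congr_pow (ha j) _) ih
  exact key _

/-- substitution formula: coefficients of `A h` as polynomial expression in
truncations of `A (X j)` -/
lemma coeff_aeq_eq (k : ℕ) (A : PS n ≃ₐ[ℂ] PS n) (h : PS n) {d : Fin n →₀ ℕ}
    (hd : degF d ≤ k) :
    coeff (R := ℂ) d (A h) =
      ∑ e : Idx n k, coeff (R := ℂ) e.1 h *
        coeff (R := ℂ) d (∏ j : Fin n, (trunc k (A (X j))) ^ (e.1 j)) := by
  classical
  -- replace h by truncation
  have h1 : coeff (R := ℂ) d (A h) = coeff (R := ℂ) d (A (trunc k h)) := by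
    have : InM (k+1) (A h - A (trunc k h)) := by
      rw [← map_sub]
      exact aeq_preserves_InM A (k+1) (sub_trunc k h)
    have h0 := this d (by omega)
    rw [map_sub] at h0
    exact sub_eq_zero.mp h0
  rw [h1, trunc, map_sum, map_sum]
  apply Finset.sum_congr rfl
  intro e _
  have hm : A (monomial (R := ℂ) e.1 (coeff (R := ℂ) e.1 h)) =
      coeff (R := ℂ) e.1 h • ∏ j : Fin n, (A (X j)) ^ (e.1 j) := by
    rw [monomial_eq_smul_prod, map_smul, map_prod]
    congr 1
    apply Finset.prod_congr rfl
    intro j _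
    rw [map_pow]
  rw [hm, map_smul, smul_eq_mul]
  congr 1
  have : InM (k+1) ((∏ j : Fin n, (A (X j)) ^ (e.1 j)) -
      ∏ j : Fin n, (trunc k (A (X j))) ^ (e.1 j)) := by
    apply congr_prod
    intro j
    exact sub_trunc k (A (X j))
  have h0 := this d (by omega)
  rw [map_sub] at h0
  exact sub_eq_zero.mp h0

section Jet
variable {k : ℕ}

/-- jet space as a pi type -/
abbrev JS (n k : ℕ) := Idx n k → ℂ

/-- the jet projection -/
def piJ (n k : ℕ) : PS n →ₗ[ℂ] JS n k where
  toFun f := fun d => coeff (R := ℂ) d.1 f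
  map_add' f g := by ext d; simp
  map_smul' c f := by ext d; simp

/-- the jet section -/
def liftJ (n k : ℕ) : JS n k →ₗ[ℂ] PS n where
  toFun v := ∑ d : Idx n k, monomial (R := ℂ) d.1 (v d)
  map_add' v w := by
    simp only [Pi.add_apply, map_add]
    rw [← Finset.sum_add_distrib]
  map_smul' c v := by
    simp only [Pi.smul_apply, smul_eq_mul, RingHom.id_apply]
    rw [Finset.smul_sum]
    apply Finset.sum_congr rfl
    intro d _
    rw [← map_smul, smul_eq_mul]

lemma piJ_liftJ (v : JS n k) : piJ n k (liftJ n k v) = v := by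
  classical
  ext d
  show coeff (R := ℂ) d.1 (∑ e : Idx n k, monomial (R := ℂ) e.1 (v e)) = v d
  rw [map_sum]
  rw [Finset.sum_eq_single d]
  · rw [coeff_monomial, if_pos rfl]
  · intro e _ he
    rw [coeff_monomial, if_neg (fun hde => he (Subtype.ext hde.symm))]
  · intro h; exact absurd (Finset.mem_univ _) h

lemma liftJ_piJ (f : PS n) : liftJ n k (piJ n k f) = trunc k f := rfl

lemma piJ_eq_zero {f : PS n} (hf : InM (k+1) f) : piJ n k f = 0 := by
  ext d
  exact hf d.1 (by have := d.2; simp only [degF]; omega)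

/-- induced operator on the jet space -/
def indOp (n k : ℕ) (T : PS n →ₗ[ℂ] PS n) : JS n k →ₗ[ℂ] JS n k :=
  (piJ n k) ∘ₗ T ∘ₗ (liftJ n k)

lemma indOp_compat {T : PS n →ₗ[ℂ] PS n}
    (hT : ∀ f : PS n, InM (k+1) f → InM (k+1) (T f)) (f : PS n) :
    piJ n k (T f) = indOp n k T (piJ n k f) := by
  have h1 : InM (k+1) (T f - T (trunc k f)) := by
    rw [← map_sub]
    exact hT _ (sub_trunc k f)
  have h2 : piJ n k (T f) - piJ n k (T (trunc k f)) = 0 := by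
    rw [← map_sub]
    exact piJ_eq_zero h1
  have h3 : piJ n k (T f) = piJ n k (T (trunc k f)) := by
    have := sub_eq_zero.mp h2; exact this
  rw [h3]
  show _ = piJ n k (T (liftJ n k (piJ n k f)))
  rw [liftJ_piJ]

lemma indOp_pow_compat {T : PS n →ₗ[ℂ] PS n}
    (hT : ∀ f : PS n, InM (k+1) f → InM (k+1) (T f)) (j : ℕ) (f : PS n) :
    piJ n k ((T ^ j) f) = ((indOp n k T) ^ j) (piJ n k f) := by
  induction j with
  | zero => rfl
  | succ j ih =>
    rw [pow_succ', pow_succ', Module.End.mul_apply, Module.End.mul_apply,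
      indOp_compat hT, ih]

lemma indOp_smul (t : ℂ) (T : PS n →ₗ[ℂ] PS n) :
    indOp n k (t • T) = t • indOp n k T := by
  apply LinearMap.ext; intro v; funext d
  show piJ n k ((t • T) (liftJ n k v)) d = _
  rw [LinearMap.smul_apply, map_smul]
  rfl

lemma indOp_sub (T S : PS n →ₗ[ℂ] PS n) :
    indOp n k (T - S) = indOp n k T - indOp n k S := by
  apply LinearMap.ext; intro v; funext d
  show piJ n k ((T - S) (liftJ n k v)) d = _
  rw [LinearMap.sub_apply, map_sub]
  rfl

end Jet
section Analysis
open NormedSpace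
variable {k : ℕ}

/-- induced continuous operator -/
def opC (n k : ℕ) (T : PS n →ₗ[ℂ] PS n) : JS n k →L[ℂ] JS n k :=
  LinearMap.toContinuousLinearMap (indOp n k T)

lemma opC_apply (T : PS n →ₗ[ℂ] PS n) (v : JS n k) : opC n k T v = indOp n k T v := rfl

lemma opC_pow_apply (T : PS n →ₗ[ℂ] PS n) (j : ℕ) (v : JS n k) :
    (opC n k T ^ j) v = ((indOp n k T) ^ j) v := by
  induction j with
  | zero => rfl
  | succ j ih =>
    rw [pow_succ', pow_succ', ContinuousLinearMap.mul_apply, Module.End.mul_apply, ih]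
    rfl

lemma isSingular_iff {Y : FormalVF n} :
    IsSingularVF Y ↔ ∀ i, InM 1 (Y (X i)) := by
  constructor
  · intro h i; exact InM_one_iff.mpr (h i)
  · intro h i; exact InM_one_iff.mp (h i)

/-- the fundamental exp-jet formula -/
lemma piJ_expSeries (Y : FormalVF n) (hY : IsSingularVF Y) (g : PS n) :
    piJ n k (expSeries Y g) =
      NormedSpace.exp (opC n k Y.toLinearMap) (piJ n k g) := by
  have hpres : ∀ f : PS n, InM (k+1) f → InM (k+1) (Y.toLinearMap f) :=
    fun f hf => singular_preserve Y (isSingular_iff.mp hY) hf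
  set A := opC n k Y.toLinearMap with hA
  have hsum : Summable fun j : ℕ => ((j.factorial : ℂ))⁻¹ • A ^ j :=
    NormedSpace.expSeries_summable' (𝕂 := ℂ) A
  ext d
  show coeff (R := ℂ) d.1 (expSeries Y g) = _
  have lhs : coeff (R := ℂ) d.1 (expSeries Y g) =
      ∑' j : ℕ, ((j.factorial : ℂ))⁻¹ * coeff (R := ℂ) d.1 (derivPow Y j g) := rfl
  rw [lhs]
  have hexp : NormedSpace.exp A = ∑' j : ℕ, ((j.factorial : ℂ))⁻¹ • A ^ j := by
    rw [NormedSpace.exp_eq_tsum (𝕂 := ℂ)]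
  rw [hexp]
  have happ : (∑' j : ℕ, ((j.factorial : ℂ))⁻¹ • A ^ j) (piJ n k g) =
      ∑' j : ℕ, (((j.factorial : ℂ))⁻¹ • A ^ j) (piJ n k g) := by
    exact (ContinuousLinearMap.apply ℂ (JS n k) (piJ n k g)).map_tsum hsum
  rw [happ]
  have hsum2 : Summable fun j : ℕ => (((j.factorial : ℂ))⁻¹ • A ^ j) (piJ n k g) :=
    hsum.map (ContinuousLinearMap.apply ℂ (JS n k) (piJ n k g))
      (ContinuousLinearMap.apply ℂ (JS n k) (piJ n k g)).continuous
  have hev : (∑' j : ℕ, (((j.factorial : ℂ))⁻¹ • A ^ j) (piJ n k g)) d =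
      ∑' j : ℕ, ((((j.factorial : ℂ))⁻¹ • A ^ j) (piJ n k g)) d := by
    exact (ContinuousLinearMap.proj (R := ℂ) (φ := fun _ : Idx n k => ℂ) d).map_tsum hsum2
  rw [hev]
  apply tsum_congr
  intro j
  have h1 : coeff (R := ℂ) d.1 (derivPow Y j g) = ((indOp n k Y.toLinearMap ^ j) (piJ n k g)) d := by
    have := indOp_pow_compat (k := k) hpres j g
    have h2 : coeff (R := ℂ) d.1 ((Y.toLinearMap ^ j) g) = (piJ n k ((Y.toLinearMap ^ j) g)) d := rfl
    rw [derivPow, h2, this]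
  rw [h1]
  show _ = (((j.factorial : ℂ))⁻¹ • (A ^ j) (piJ n k g)) d
  rw [opC_pow_apply]
  rfl

end Analysis

section Comm
variable {k : ℕ}

/-- a coordinate-evaluation formula for `exp` -/
lemma exp_apply_coord (A : JS n k →L[ℂ] JS n k) (v : JS n k) (d : Idx n k) :
    NormedSpace.exp A v d = ∑' j : ℕ, ((j.factorial : ℂ))⁻¹ * ((A ^ j) v d) := by
  have hsum : Summable fun j : ℕ => ((j.factorial : ℂ))⁻¹ • A ^ j :=
    NormedSpace.expSeries_summable' (𝕂 := ℂ) A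
  have hsum2 : Summable fun j : ℕ => (((j.factorial : ℂ))⁻¹ • A ^ j) v :=
    hsum.map (ContinuousLinearMap.apply ℂ (JS n k) v)
      (ContinuousLinearMap.apply ℂ (JS n k) v).continuous
  have e1 : NormedSpace.exp A = ∑' j : ℕ, ((j.factorial : ℂ))⁻¹ • A ^ j := by
    rw [NormedSpace.exp_eq_tsum (𝕂 := ℂ)]
  have e2 : (∑' j : ℕ, ((j.factorial : ℂ))⁻¹ • A ^ j) v =
      ∑' j : ℕ, (((j.factorial : ℂ))⁻¹ • A ^ j) v :=
    (ContinuousLinearMap.apply ℂ (JS n k) v).map_tsum hsum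
  have e3 : (∑' j : ℕ, (((j.factorial : ℂ))⁻¹ • A ^ j) v) d =
      ∑' j : ℕ, ((((j.factorial : ℂ))⁻¹ • A ^ j) v) d :=
    (ContinuousLinearMap.proj (R := ℂ) (φ := fun _ : Idx n k => ℂ) d).map_tsum hsum2
  rw [e1, e2, e3]
  rfl

/-- jets of the exponential of a singular vector field -/
lemma piJ_isExpOf {F : FormalDiffeo n} {Y : FormalVF n} (hexp : IsExpOf F Y)
    (hY : IsSingularVF Y) (g : PS n) :
    piJ n k (F g) = NormedSpace.exp (opC n k Y.toLinearMap) (piJ n k g) := by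
  rw [hexp g, piJ_expSeries Y hY]

/-- exponentials with the same flow agree on jets -/
lemma exp_opC_eq {F : FormalDiffeo n} {Xv Yv : FormalVF n}
    (hX : IsExpOf F Xv) (hY : IsExpOf F Yv) (hXs : IsSingularVF Xv) (hYs : IsSingularVF Yv) :
    NormedSpace.exp (opC n k Xv.toLinearMap) = NormedSpace.exp (opC n k Yv.toLinearMap) := by
  apply ContinuousLinearMap.ext
  intro v
  have h1 := (piJ_isExpOf (k := k) hX hXs (liftJ n k v)).symm
  have h2 := piJ_isExpOf (k := k) hY hYs (liftJ n k v)
  rw [piJ_liftJ] at h1 h2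
  exact h1.trans h2

/-- jets of a singular derivation -/
lemma piJ_deriv (D : FormalVF n) (hD : IsSingularVF D) (f : PS n) :
    piJ n k (D f) = indOp n k D.toLinearMap (piJ n k f) :=
  indOp_compat (fun h hh => singular_preserve D (isSingular_iff.mp hD) hh) f

/-- the commutation predicate -/
def CommVF (Xv : FormalVF n) (L : FormalDiffeo n) : Prop :=
  ∀ f : PS n, L (Xv f) = Xv (L f)

lemma commVF_of_exp {F : FormalDiffeo n} {Xv : FormalVF n} (hX : IsExpOf F Xv)
    (hXs : IsSingularVF Xv) : CommVF Xv F := by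
  intro f
  have key : ∀ k : ℕ, piJ n k (F (Xv f)) = piJ n k (Xv (F f)) := by
    intro k
    have h1 : piJ n k (F (Xv f)) =
        NormedSpace.exp (opC n k Xv.toLinearMap) (indOp n k Xv.toLinearMap (piJ n k f)) := by
      rw [piJ_isExpOf hX hXs, piJ_deriv Xv hXs]
    have h2 : piJ n k (Xv (F f)) =
        indOp n k Xv.toLinearMap (NormedSpace.exp (opC n k Xv.toLinearMap) (piJ n k f)) := by
      rw [piJ_deriv Xv hXs (F f), piJ_isExpOf hX hXs]
    rw [h1, h2]
    have hc : Commute (opC n k Xv.toLinearMap) (NormedSpace.exp (opC n k Xv.toLinearMap)) :=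
      (Commute.refl _).exp_right
    calc NormedSpace.exp (opC n k Xv.toLinearMap) (indOp n k Xv.toLinearMap (piJ n k f))
        = (NormedSpace.exp (opC n k Xv.toLinearMap) * opC n k Xv.toLinearMap) (piJ n k f) := rfl
      _ = (opC n k Xv.toLinearMap * NormedSpace.exp (opC n k Xv.toLinearMap)) (piJ n k f) := by
          rw [hc.eq]
      _ = indOp n k Xv.toLinearMap (NormedSpace.exp (opC n k Xv.toLinearMap) (piJ n k f)) := rfl
  ext d
  have := congrFun (key (degF d)) ⟨d, le_rfl⟩
  exact this

lemma CommVF.mul {Xv : FormalVF n} {L L' : FormalDiffeo n} (h : CommVF Xv L)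
    (h' : CommVF Xv L') : CommVF Xv (L * L') := by
  intro f
  show L (L' (Xv f)) = Xv (L (L' f))
  rw [h' f, h (L' f)]

lemma CommVF.inv {Xv : FormalVF n} {L : FormalDiffeo n} (h : CommVF Xv L) :
    CommVF Xv L⁻¹ := by
  intro f
  show L.symm (Xv f) = Xv (L.symm f)
  apply L.injective
  rw [L.apply_symm_apply, h (L.symm f), L.apply_symm_apply]

lemma CommVF.one {Xv : FormalVF n} : CommVF Xv (1 : FormalDiffeo n) := fun _ => rfl

lemma CommVF.zpow {Xv : FormalVF n} {F : FormalDiffeo n} (h : CommVF Xv F) (m : ℤ) :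
    CommVF Xv (F ^ m) := by
  induction m using Int.induction_on with
  | zero => simpa using CommVF.one
  | succ m ih =>
    rw [zpow_add_one]
    exact ih.mul h
  | pred m ih =>
    rw [zpow_sub_one]
    exact ih.mul h.inv

end Comm

section Poly
variable {k : ℕ}

lemma coord_mem (i : Fin n) (d : Idx n k) :
    (fun J : JetSpace n k => J i d) ∈ polyFuns n k :=
  Algebra.subset_adjoin ⟨i, d, rfl⟩

lemma const_mem (c : ℂ) : (fun _ : JetSpace n k => c) ∈ polyFuns n k := by
  have : (fun _ : JetSpace n k => c) = algebraMap ℂ (JetSpace n k → ℂ) c := rfl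
  rw [this]
  exact Subalgebra.algebraMap_mem _ c

/-- predicate: the coefficients of a series-valued function of jets are polynomial -/
def Qp (n k : ℕ) (A : JetSpace n k → PS n) : Prop :=
  ∀ d : Idx n k, (fun J => coeff (R := ℂ) d.1 (A J)) ∈ polyFuns n k

lemma Qp.mul {A B : JetSpace n k → PS n} (hA : Qp n k A) (hB : Qp n k B) :
    Qp n k (fun J => A J * B J) := by
  intro d
  have : (fun J => coeff (R := ℂ) d.1 (A J * B J)) =
      fun J => ∑ p ∈ Finset.HasAntidiagonal.antidiagonal d.1, coeff (R := ℂ) p.1 (A J) * coeff (R := ℂ) p.2 (B J) := by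
    funext J
    exact coeff_mul d.1 (A J) (B J)
  rw [this]
  have : (fun J => ∑ p ∈ Finset.HasAntidiagonal.antidiagonal d.1, coeff (R := ℂ) p.1 (A J) * coeff (R := ℂ) p.2 (B J)) =
      ∑ p ∈ Finset.HasAntidiagonal.antidiagonal d.1, fun J => coeff (R := ℂ) p.1 (A J) * coeff (R := ℂ) p.2 (B J) := by
    funext J
    rw [Finset.sum_apply]
  rw [this]
  apply Subalgebra.sum_mem
  rintro ⟨u, v⟩ huv
  rw [Finset.HasAntidiagonal.mem_antidiagonal] at huv
  have hu : degF u ≤ k := by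
    have := degF_add u v
    rw [huv] at this
    have hd := d.2
    show degF u ≤ k
    have : degF u ≤ degF d.1 := by omega
    exact le_trans this hd
  have hv : degF v ≤ k := by
    have := degF_add u v
    rw [huv] at this
    have hd := d.2
    have : degF v ≤ degF d.1 := by omega
    exact le_trans this hd
  exact Subalgebra.mul_mem _ (hA ⟨u, hu⟩) (hB ⟨v, hv⟩)

lemma Qp.one : Qp n k (fun _ => (1 : PS n)) := by
  intro d
  exact const_mem _

lemma Qp.row (j : Fin n) : Qp n k (fun J => liftJ n k (J j)) := by
  intro d
  have : (fun J : JetSpace n k => coeff (R := ℂ) d.1 (liftJ n k (J j))) =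
      fun J : JetSpace n k => J j d := by
    funext J
    have := congrFun (piJ_liftJ (n := n) (k := k) (J j)) d
    exact this
  rw [this]
  exact coord_mem j d

lemma Qp.pow {A : JetSpace n k → PS n} (hA : Qp n k A) (m : ℕ) :
    Qp n k (fun J => A J ^ m) := by
  induction m with
  | zero => simpa using Qp.one
  | succ m ih =>
    have : (fun J => A J ^ (m+1)) = fun J => A J ^ m * A J := by
      funext J; rw [pow_succ]
    rw [this]
    exact ih.mul hA

lemma Qp.prod (e : Fin n →₀ ℕ) :
    Qp n k (fun J => ∏ j : Fin n, (liftJ n k (J j)) ^ (e j)) := by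
  have key : ∀ s : Finset (Fin n), Qp n k (fun J => ∏ j ∈ s, (liftJ n k (J j)) ^ (e j)) := by
    intro s
    induction s using Finset.cons_induction with
    | empty => simpa using Qp.one
    | cons j s hj ih =>
      have : (fun J : JetSpace n k => ∏ j' ∈ Finset.cons j s hj, (liftJ n k (J j')) ^ (e j')) =
          fun J => (liftJ n k (J j)) ^ (e j) * ∏ j' ∈ s, (liftJ n k (J j')) ^ (e j') := by
        funext J; rw [Finset.prod_cons]
      rw [this]
      exact Qp.mul ((Qp.row j).pow (e j)) ih
  exact key _

lemma linear_coord (T : JS n k →ₗ[ℂ] JS n k) (v : JS n k) (d : Idx n k) :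
    T v d = ∑ e : Idx n k, v e * (T (Pi.single e 1)) d := by
  classical
  have hv : (∑ e : Idx n k, v e • (Pi.single e (1 : ℂ) : JS n k)) = v := by
    have h2 : (∑ e : Idx n k, v e • (Pi.single e (1 : ℂ) : JS n k)) =
        ∑ e : Idx n k, (Pi.single e (v e) : JS n k) := by
      apply Finset.sum_congr rfl
      intro e _
      rw [← Pi.single_smul, smul_eq_mul, mul_one]
    rw [h2, Finset.univ_sum_single]
  conv_lhs => rw [← hv]
  rw [map_sum, Finset.sum_apply]
  apply Finset.sum_congr rfl
  intro e _
  rw [map_smul]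
  rfl

/-- the commutation polynomial for a vector field -/
def commPoly (Xv : FormalVF n) (k : ℕ) (i : Fin n) (d : Idx n k) : JetSpace n k → ℂ :=
  fun J => (∑ e : Idx n k, coeff (R := ℂ) e.1 (Xv (X i)) *
      coeff (R := ℂ) d.1 (∏ j : Fin n, (liftJ n k (J j)) ^ (e.1 j))) -
    (indOp n k Xv.toLinearMap (J i)) d

lemma commPoly_mem (Xv : FormalVF n) (i : Fin n) (d : Idx n k) :
    commPoly Xv k i d ∈ polyFuns n k := by
  apply Subalgebra.sub_mem
  · have : (fun J : JetSpace n k => ∑ e : Idx n k, coeff (R := ℂ) e.1 (Xv (X i)) *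
        coeff (R := ℂ) d.1 (∏ j : Fin n, (liftJ n k (J j)) ^ (e.1 j))) =
        ∑ e : Idx n k, fun J : JetSpace n k => coeff (R := ℂ) e.1 (Xv (X i)) *
          coeff (R := ℂ) d.1 (∏ j : Fin n, (liftJ n k (J j)) ^ (e.1 j)) := by
      funext J; rw [Finset.sum_apply]
    rw [this]
    apply Subalgebra.sum_mem
    intro e _
    exact Subalgebra.mul_mem _ (const_mem _) (Qp.prod e.1 d)
  · have : (fun J : JetSpace n k => (indOp n k Xv.toLinearMap (J i)) d) =
        fun J : JetSpace n k => ∑ e : Idx n k,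
          (J i e) * ((indOp n k Xv.toLinearMap) (Pi.single e 1)) d := by
      funext J
      exact linear_coord _ (J i) d
    rw [this]
    have : (fun J : JetSpace n k => ∑ e : Idx n k,
          (J i e) * ((indOp n k Xv.toLinearMap) (Pi.single e 1)) d) =
        ∑ e : Idx n k, fun J : JetSpace n k =>
          (J i e) * ((indOp n k Xv.toLinearMap) (Pi.single e 1)) d := by
      funext J; rw [Finset.sum_apply]
    rw [this]
    apply Subalgebra.sum_mem
    intro e _
    exact Subalgebra.mul_mem _ (coord_mem i e) (const_mem _)

lemma jetOf_row (L : FormalDiffeo n) (j : Fin n) :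
    (jetOf n k L j : JS n k) = piJ n k (L (X j)) := rfl

lemma commPoly_eval (Xv : FormalVF n) (hXs : IsSingularVF Xv) (i : Fin n) (d : Idx n k)
    (L : FormalDiffeo n) :
    commPoly Xv k i d (jetOf n k L) =
      coeff (R := ℂ) d.1 (L (Xv (X i))) - coeff (R := ℂ) d.1 (Xv (L (X i))) := by
  rw [commPoly]
  congr 1
  · rw [coeff_aeq_eq k L (Xv (X i)) d.2]
    apply Finset.sum_congr rfl
    intro e _
    congr 1
  · have h1 : coeff (R := ℂ) d.1 (Xv (L (X i))) = (piJ n k (Xv (L (X i)))) d := rfl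
    rw [h1, piJ_deriv Xv hXs, jetOf_row]

end Poly

section Transfer
variable {k : ℕ}

lemma transfer (φ : JetSpace n k → ℂ) (hφ : φ ∈ polyFuns n k)
    (G : Set (FormalDiffeo n)) (hz : ∀ L ∈ G, φ (jetOf n k L) = 0)
    {F' : FormalDiffeo n} (hF' : F' ∈ proAlgClosure G) :
    φ (jetOf n k F') = 0 := by
  letI := zTop n k
  have hopen : IsOpen {x : JetSpace n k | φ x ≠ 0} :=
    TopologicalSpace.isOpen_generateFrom_of_mem ⟨φ, hφ, rfl⟩
  have hclosed : IsClosed {x : JetSpace n k | φ x = 0} := by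
    rw [← isOpen_compl_iff]
    have hc : {x : JetSpace n k | φ x = 0}ᶜ = {x : JetSpace n k | φ x ≠ 0} := by
      ext x; simp
    rw [hc]
    exact hopen
  have hsub : jetOf n k '' G ⊆ {x : JetSpace n k | φ x = 0} := by
    rintro y ⟨L, hL, rfl⟩
    exact hz L hL
  have := closure_minimal hsub hclosed (hF' k)
  exact this

end Transfer

section Main
variable {k : ℕ}

/-- elements of the pro-algebraic closure of the flow commute with the field at the jet level -/
lemma closure_jet_comm (Xv : FormalVF n) (hXs : IsSingularVF Xv) (F : FormalDiffeo n)
    (hX : IsExpOf F Xv) {G : FormalDiffeo n}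
    (hG : G ∈ proAlgClosure (Subgroup.zpowers F : Set (FormalDiffeo n)))
    (i : Fin n) (d : Idx n k) :
    coeff (R := ℂ) d.1 (G (Xv (X i))) = coeff (R := ℂ) d.1 (Xv (G (X i))) := by
  have hcomm : CommVF Xv F := commVF_of_exp hX hXs
  have hz : ∀ L ∈ (Subgroup.zpowers F : Set (FormalDiffeo n)),
      commPoly Xv k i d (jetOf n k L) = 0 := by
    intro L hL
    obtain ⟨m, rfl⟩ := Subgroup.mem_zpowers_iff.mp hL
    rw [commPoly_eval Xv hXs i d]
    rw [(hcomm.zpow m) (X i)]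
    ring
  have h0 := transfer (commPoly Xv k i d) (commPoly_mem Xv i d) _ hz hG
  rw [commPoly_eval Xv hXs i d] at h0
  exact sub_eq_zero.mp h0

lemma smul_singular (t : ℂ) {Yv : FormalVF n} (hY : IsSingularVF Yv) :
    IsSingularVF (t • Yv) := by
  intro i
  have h1 : (t • Yv) (X i) = t • (Yv (X i)) := rfl
  rw [← coeff_zero_eq_constantCoeff_apply, h1, map_smul, coeff_zero_eq_constantCoeff_apply,
    hY i, smul_zero]

lemma opC_smul (t : ℂ) (T : PS n →ₗ[ℂ] PS n) :
    opC n k (t • T) = t • opC n k T := by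
  apply ContinuousLinearMap.ext
  intro v
  show indOp n k (t • T) v = _
  rw [indOp_smul]
  rfl

/-- the key derivative extraction: the flows of `Y` commute with `X` at the jet level -/
lemma deriv_extract (Xv Yv : FormalVF n) (hXs : IsSingularVF Xv) (hYs : IsSingularVF Yv)
    (F : FormalDiffeo n) (hX : IsExpOf F Xv)
    (hY : InLieAlgOf (Subgroup.zpowers F : Set (FormalDiffeo n)) Yv)
    (i : Fin n) :
    piJ n k (Yv (Xv (X i))) = piJ n k (Xv (Yv (X i))) := by
  classical
  set A := opC n k Xv.toLinearMap with hA
  set B := opC n k Yv.toLinearMap with hB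
  set w := piJ n k (X i : PS n) with hw
  -- for every t, the two sides agree
  have key : ∀ t : ℂ, NormedSpace.exp (t • B) (A w) = A (NormedSpace.exp (t • B) w) := by
    intro t
    obtain ⟨G, hGcl, hGexp⟩ := hY t
    have hts : IsSingularVF (t • Yv) := smul_singular t hYs
    have htl : (t • Yv).toLinearMap = t • Yv.toLinearMap := rfl
    have h1 : piJ n k (G (Xv (X i))) = NormedSpace.exp (t • B) (A w) := by
      rw [piJ_isExpOf hGexp hts, htl, opC_smul]
      congr 1
      rw [piJ_deriv Xv hXs]
      rfl
    have h2 : piJ n k (Xv (G (X i))) = A (NormedSpace.exp (t • B) w) := by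
      rw [piJ_deriv Xv hXs, piJ_isExpOf hGexp hts, htl, opC_smul]
      rfl
    have h3 : piJ n k (G (Xv (X i))) = piJ n k (Xv (G (X i))) := by
      ext d
      exact closure_jet_comm Xv hXs F hX hGcl i d
    rw [← h1, h3, h2]
  -- differentiate at `t = 0`
  have hd1 : HasDerivAt (fun t : ℂ => NormedSpace.exp (t • B) (A w)) (B (A w)) 0 := by
    have h := hasDerivAt_exp_smul_const (𝕂 := ℂ) B (0 : ℂ)
    have h2 := h.clm_apply (hasDerivAt_const (0 : ℂ) (A w))
    have e : NormedSpace.exp ((0:ℂ) • B) = 1 :=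
      (congrArg NormedSpace.exp (zero_smul ℂ B)).trans NormedSpace.exp_zero
    rw [e] at h2
    simpa using h2
  have hd2 : HasDerivAt (fun t : ℂ => A (NormedSpace.exp (t • B) w)) (A (B w)) 0 := by
    have h := hasDerivAt_exp_smul_const (𝕂 := ℂ) B (0 : ℂ)
    have h2 := h.clm_apply (hasDerivAt_const (0 : ℂ) w)
    have e : NormedSpace.exp ((0:ℂ) • B) = 1 :=
      (congrArg NormedSpace.exp (zero_smul ℂ B)).trans NormedSpace.exp_zero
    rw [e] at h2
    have h3 := A.hasFDerivAt.comp_hasDerivAt (0 : ℂ) (by simpa using h2)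
    exact h3
  have heq : (fun t : ℂ => NormedSpace.exp (t • B) (A w)) =
      fun t : ℂ => A (NormedSpace.exp (t • B) w) := funext key
  rw [heq] at hd1
  have := hd1.unique hd2
  -- translate back
  have e1 : piJ n k (Yv (Xv (X i))) = B (A w) := by
    rw [piJ_deriv Yv hYs, piJ_deriv Xv hXs]
    rfl
  have e2 : piJ n k (Xv (Yv (X i))) = A (B w) := by
    rw [piJ_deriv Xv hXs, piJ_deriv Yv hYs]
    rfl
  rw [e1, e2, this]

end Main

section Final
variable {k : ℕ}

lemma degF_eq_one {d : Fin n →₀ ℕ} (h : degF d = 1) : ∃ j, d = Finsupp.single j 1 := by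
  have hs : d.support.Nonempty := by
    rw [Finsupp.support_nonempty_iff]
    intro h0; rw [h0, degF_zero] at h; omega
  obtain ⟨j, hj⟩ := hs
  have h1 : 1 ≤ d j := by have := Finsupp.mem_support_iff.mp hj; omega
  have h2 : d j ≤ 1 := le_trans (le_degF d j) (by omega)
  refine ⟨j, ?_⟩
  have hre := sub_single_add (d := d) (i := j) h1
  have h0 : degF (d - Finsupp.single j 1) = 0 := by
    have := degF_add (d - Finsupp.single j 1) (Finsupp.single j 1)
    rw [hre, degF_single] at this
    omega
  have := degF_eq_zero h0
  rw [← hre, this, zero_add]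

/-- commutation of the two vector fields -/
lemma fields_commute (Xv Yv : FormalVF n) (hXs : IsSingularVF Xv) (hYs : IsSingularVF Yv)
    (F : FormalDiffeo n) (hX : IsExpOf F Xv)
    (hY : InLieAlgOf (Subgroup.zpowers F : Set (FormalDiffeo n)) Yv)
    (f : PS n) : Xv (Yv f) = Yv (Xv f) := by
  have hgen : ∀ i, Xv (Yv (X i)) = Yv (Xv (X i)) := by
    intro i
    ext d
    have h := deriv_extract (k := degF d) Xv Yv hXs hYs F hX hY i
    have := congrFun h ⟨d, le_rfl⟩
    exact this.symm
  have hbr : (⁅Xv, Yv⁆ : FormalVF n) = 0 := by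
    have h0 : ∀ g : PS n, (⁅Xv, Yv⁆ : FormalVF n) g = 0 := by
      apply deriv_eq_zero
      intro i
      rw [Derivation.commutator_apply, hgen i, sub_self]
    ext g
    rw [h0 g]
    rfl
  have := congrArg (fun D : FormalVF n => D f) hbr
  simp only [Derivation.commutator_apply] at this
  have h2 : Xv (Yv f) - Yv (Xv f) = 0 := this
  exact sub_eq_zero.mp h2

/-- commutation of the induced operators -/
lemma opC_commute (Xv Yv : FormalVF n) (hXs : IsSingularVF Xv) (hYs : IsSingularVF Yv)
    (F : FormalDiffeo n) (hX : IsExpOf F Xv)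
    (hY : InLieAlgOf (Subgroup.zpowers F : Set (FormalDiffeo n)) Yv) :
    Commute (opC n k Xv.toLinearMap) (opC n k Yv.toLinearMap) := by
  apply ContinuousLinearMap.ext
  intro v
  show indOp n k Xv.toLinearMap (indOp n k Yv.toLinearMap v) =
    indOp n k Yv.toLinearMap (indOp n k Xv.toLinearMap v)
  have hYv : indOp n k Yv.toLinearMap v = piJ n k (Yv (liftJ n k v)) := rfl
  have hXv : indOp n k Xv.toLinearMap v = piJ n k (Xv (liftJ n k v)) := rfl
  rw [hYv, hXv, ← piJ_deriv Xv hXs, ← piJ_deriv Yv hYs,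
    fields_commute Xv Yv hXs hYs F hX hY]

lemma opC_sub (T S : PS n →ₗ[ℂ] PS n) :
    opC n k (T - S) = opC n k T - opC n k S := by
  apply ContinuousLinearMap.ext
  intro v
  show indOp n k (T - S) v = _
  rw [indOp_sub]
  rfl

/-- exp of the difference is the identity -/
lemma exp_diff_eq_one (Xv Yv : FormalVF n) (hXs : IsSingularVF Xv) (hYs : IsSingularVF Yv)
    (F : FormalDiffeo n) (hX : IsExpOf F Xv) (hYe : IsExpOf F Yv)
    (hY : InLieAlgOf (Subgroup.zpowers F : Set (FormalDiffeo n)) Yv) :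
    NormedSpace.exp (opC n k (Xv.toLinearMap - Yv.toLinearMap)) = 1 := by
  set A := opC n k Xv.toLinearMap with hA
  set B := opC n k Yv.toLinearMap with hB
  have hAB : Commute A B := opC_commute Xv Yv hXs hYs F hX hY
  have hEq : NormedSpace.exp A = NormedSpace.exp B := exp_opC_eq hX hYe hXs hYs
  rw [opC_sub]
  have h1 : NormedSpace.exp (A - B) * NormedSpace.exp B = NormedSpace.exp A := by
    rw [← NormedSpace.exp_add_of_commute_of_mem_ball (𝕂 := ℂ) (hAB.sub_left (Commute.refl B))
      ((NormedSpace.expSeries_radius_eq_top ℂ (JS n k →L[ℂ] JS n k)).symm ▸ edist_lt_top _ _)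
      ((NormedSpace.expSeries_radius_eq_top ℂ (JS n k →L[ℂ] JS n k)).symm ▸ edist_lt_top _ _)]
    congr 1
    rw [sub_add_cancel]
  have h2 : NormedSpace.exp B * NormedSpace.exp (-B) = 1 := by
    rw [← NormedSpace.exp_add_of_commute_of_mem_ball (𝕂 := ℂ) ((Commute.refl B).neg_right)
      ((NormedSpace.expSeries_radius_eq_top ℂ (JS n k →L[ℂ] JS n k)).symm ▸ edist_lt_top _ _)
      ((NormedSpace.expSeries_radius_eq_top ℂ (JS n k →L[ℂ] JS n k)).symm ▸ edist_lt_top _ _)]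
    rw [add_neg_cancel, NormedSpace.exp_zero]
  calc NormedSpace.exp (A - B)
      = NormedSpace.exp (A - B) * (NormedSpace.exp B * NormedSpace.exp (-B)) := by
        rw [h2, mul_one]
    _ = (NormedSpace.exp (A - B) * NormedSpace.exp B) * NormedSpace.exp (-B) := by
        rw [mul_assoc]
    _ = NormedSpace.exp A * NormedSpace.exp (-B) := by rw [h1]
    _ = NormedSpace.exp B * NormedSpace.exp (-B) := by rw [hEq]
    _ = 1 := h2

end Final

section Conclusion

variable {Xv Yv : FormalVF n} {F : FormalDiffeo n}

lemma sub_base (hXs : IsSingularVF Xv) (hYs : IsSingularVF Yv)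
    (hlin : linPartV Xv = linPartV Yv) (i : Fin n) : InM 2 ((Xv - Yv) (X i)) := by
  intro d hd
  have hsub : (Xv - Yv) (X i) = Xv (X i) - Yv (X i) := rfl
  rw [hsub, map_sub]
  have hcases : degF d = 0 ∨ degF d = 1 := by omega
  rcases hcases with h0 | h1
  · have : d = 0 := degF_eq_zero h0
    subst this
    rw [coeff_zero_eq_constantCoeff_apply, coeff_zero_eq_constantCoeff_apply, hXs i, hYs i,
      sub_self]
  · obtain ⟨j, rfl⟩ := degF_eq_one h1
    have := congrFun (congrFun hlin i) j
    rw [linPartV, linPartV] at this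
    have h2 : coeff (R := ℂ) (Finsupp.single j 1) (Xv (X i)) =
        coeff (R := ℂ) (Finsupp.single j 1) (Yv (X i)) := this
    rw [h2, sub_self]

lemma zpow_bound (m : ℕ) (hm : ∀ i', InM (m+2) ((Xv - Yv) (X i'))) (i : Fin n) :
    ∀ j : ℕ, InM (1 + j*(m+1)) (((Xv - Yv).toLinearMap ^ j) (X i)) := by
  intro j
  induction j with
  | zero => simpa using InM_X i
  | succ j ih =>
    rw [pow_succ', Module.End.mul_apply]
    have hstep := deriv_bound (Xv - Yv) (m+1) (fun i' => hm i') ih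
    apply hstep.mono
    rw [Nat.succ_mul]
    omega

lemma sub_vanishes (hXs : IsSingularVF Xv) (hYs : IsSingularVF Yv)
    (hX : IsExpOf F Xv) (hYe : IsExpOf F Yv)
    (hlin : linPartV Xv = linPartV Yv)
    (hY : InLieAlgOf (Subgroup.zpowers F : Set (FormalDiffeo n)) Yv)
    (i : Fin n) : (Xv - Yv) (X i) = 0 := by
  have hbase := sub_base hXs hYs hlin
  -- the main induction
  have claim : ∀ m : ℕ, ∀ i', InM (m+2) ((Xv - Yv) (X i')) := by
    intro m
    induction m with
    | zero => exact hbase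
    | succ m hm =>
      intro i'
      intro d hd
      by_cases hsmall : degF d < m+2
      · exact hm i' d hsmall
      · have hK : degF d = m+2 := by omega
        set k := m + 2 with hk
        set Zl := (Xv - Yv).toLinearMap with hZl
        have hd2 : degF d ≤ k := by omega
        set d' : Idx n k := ⟨d, hd2⟩ with hd'
        set w := piJ n k (X i' : PS n) with hw
        set N := opC n k Zl with hN
        have hexp1 : NormedSpace.exp N = 1 :=
          exp_diff_eq_one Xv Yv hXs hYs F hX hYe hY
        have hpres : ∀ f : PS n, InM (k+1) f → InM (k+1) (Zl f) := by
          intro f hf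
          have := deriv_bound (Xv - Yv) 1 hbase hf
          exact this.mono (by omega)
        have hNj : ∀ j : ℕ, (N ^ j) w d' = coeff (R := ℂ) d ((Zl ^ j) (X i')) := by
          intro j
          rw [opC_pow_apply]
          rw [hw, ← indOp_pow_compat hpres]
          rfl
        have hXcoeff : coeff (R := ℂ) d (X i' : PS n) = 0 := by
          rw [X_def, coeff_monomial]
          have : d ≠ Finsupp.single i' 1 := by
            intro hcon
            rw [hcon, degF_single] at hK
            omega
          simp only [if_neg (fun hcon : d = Finsupp.single i' 1 => this hcon)]
        have h0 : NormedSpace.exp N w d' = 0 := by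
          rw [hexp1]
          show w d' = 0
          exact hXcoeff
        rw [exp_apply_coord] at h0
        have hvanish : ∀ j ∉ Finset.range 2,
            ((j.factorial : ℂ))⁻¹ * ((N ^ j) w d') = 0 := by
          intro j hj
          rw [Finset.mem_range] at hj
          have hj2 : 2 ≤ j := by omega
          rw [hNj j]
          have hbound := zpow_bound m hm i' j
          have hlt : degF d < 1 + j*(m+1) := by
            have : 2*(m+1) ≤ j*(m+1) := Nat.mul_le_mul_right _ hj2
            omega
          rw [hbound d hlt, mul_zero]
        rw [tsum_eq_sum hvanish] at h0
        rw [Finset.sum_range_succ, Finset.sum_range_one] at h0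
        rw [hNj 0, hNj 1] at h0
        have hZ0 : ((Zl ^ 0) (X i') : PS n) = X i' := rfl
        have hZ1 : ((Zl ^ 1) (X i') : PS n) = (Xv - Yv) (X i') := by
          rw [pow_one]; rfl
        rw [hZ0, hZ1, hXcoeff] at h0
        simp only [Nat.factorial_zero, Nat.factorial_one, Nat.cast_one, inv_one, one_mul,
          mul_zero, zero_add] at h0
        exact h0
  ext d
  rw [map_zero]
  show coeff (R := ℂ) d ((Xv - Yv) (X i)) = 0
  exact claim (degF d) i d (by omega)

theorem main_result (hXs : IsSingularVF Xv) (hYs : IsSingularVF Yv)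
    (hX : IsExpOf F Xv) (hYe : IsExpOf F Yv)
    (hlin : linPartV Xv = linPartV Yv)
    (hY : InLieAlgOf (Subgroup.zpowers F : Set (FormalDiffeo n)) Yv) :
    Xv = Yv := by
  have hzero : ∀ f : PS n, (Xv - Yv) f = 0 :=
    deriv_eq_zero (Xv - Yv) (sub_vanishes hXs hYs hX hYe hlin hY)
  apply Derivation.ext
  intro f
  have := hzero f
  have h2 : Xv f - Yv f = 0 := this
  exact sub_eq_zero.mp h2

end Conclusion
end Aux

/-- if `Exp(X) = Exp(Y) = F`, `D₀X = D₀Y`, and `Y` belongs to the Lie algebra of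
the pro-algebraic closure of `⟨F⟩`, then `X = Y`. -/
theorem infGen_unique_given_linear_part {n : ℕ} (X Y : FormalVF n) (F : FormalDiffeo n)
    (hsingX : IsSingularVF X) (hsingY : IsSingularVF Y)
    (hexpX : IsExpOf F X) (hexpY : IsExpOf F Y)
    (hlin : linPartV X = linPartV Y)
    (hY : InLieAlgOf (Subgroup.zpowers F : Set (FormalDiffeo n)) Y) :
    X = Y := by
  exact Aux.main_result hsingX hsingY hexpX hexpY hlin hY

end
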